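/- Let Ω ⊂ ℝⁿ be an open bounded set with the Lebesgue measure, let E be a real Hilbert space, let K ≥ 1 be an integer, and let 0 < ε ≤ M. Let w₁,…,w_K : Ω → ℝ be Lebesgue-measurable with ε ≤ w_k(x) ≤ M for all x ∈ Ω and k = 1,…,K. Let A, B ∈ L²(Ω,E) and define F̂₀ := A, F̂_K := B and F̂_k(x) := A(x) + t_k(x)·(B(x) − A(x)) for k = 1,…,K−1, where t_k(x) := (∑_{i=1}^k w_i(x)⁻¹)/(∑_{i=1}^K w_i(x)⁻¹). Then each F̂_k ∈ L²(Ω,E), and for all G₀,…,G_K ∈ L²(Ω,E) with G₀ = A and G_K = B one has ∑_{k=1}^K ∫_Ω w_k(x)·‖G_k(x) − G_{k−1}(x)‖² dx ≥ ∑_{k=1}^K ∫_Ω w_k(x)·‖F̂_k(x) − F̂_{k−1}(x)‖² dx, with equality if and only if G_k = F̂_k almost everywhere for all k = 1,…,K−1. -/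

import Mathlib

open MeasureTheory Finset
open scoped ENNReal

private lemma sum_Icc_telescope {E : Type*} [AddCommGroup E] (d : ℕ → E) (K : ℕ) :
    ∑ k ∈ Finset.Icc 1 K, (d k - d (k - 1)) = d K - d 0 := by
  induction K with
  | zero => simp
  | succ K ih =>
      rw [Finset.sum_Icc_succ_top (Nat.le_add_left 1 K), ih]
      simp only [Nat.add_sub_cancel]
      abel

private lemma energy_decomp {E : Type*} [NormedAddCommGroup E] [InnerProductSpace ℝ E]
    (K : ℕ) (c : ℝ) (v : E) (wv : ℕ → ℝ) (f g : ℕ → E)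
    (h0 : g 0 = f 0) (hK : g K = f K)
    (hwne : ∀ k ∈ Finset.Icc 1 K, wv k ≠ 0)
    (hf : ∀ k ∈ Finset.Icc 1 K, f k - f (k - 1) = ((wv k)⁻¹ * c) • v) :
    ∑ k ∈ Finset.Icc 1 K, wv k * ‖g k - g (k - 1)‖ ^ 2
      = ∑ k ∈ Finset.Icc 1 K, wv k * ‖f k - f (k - 1)‖ ^ 2
        + ∑ k ∈ Finset.Icc 1 K, wv k * ‖(g k - f k) - (g (k - 1) - f (k - 1))‖ ^ 2 := by
  have key : ∀ k ∈ Finset.Icc 1 K,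
      wv k * ‖g k - g (k - 1)‖ ^ 2
        = (wv k * ‖f k - f (k - 1)‖ ^ 2
            + wv k * ‖(g k - f k) - (g (k - 1) - f (k - 1))‖ ^ 2)
          + (2 * c) * (inner ℝ v ((g k - f k) - (g (k - 1) - f (k - 1))) : ℝ) := by
    intro k hk
    have hgd : g k - g (k - 1)
        = (f k - f (k - 1)) + ((g k - f k) - (g (k - 1) - f (k - 1))) := by abel
    rw [hgd, norm_add_sq_real, hf k hk, real_inner_smul_left]
    have h1 : wv k * ((wv k)⁻¹ * c) = c := mul_inv_cancel_left₀ (hwne k hk) c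
    set I : ℝ := inner ℝ v ((g k - f k) - (g (k - 1) - f (k - 1)))
    linear_combination (2 * I) * h1
  rw [Finset.sum_congr rfl key, Finset.sum_add_distrib, Finset.sum_add_distrib]
  have hsum0 : (∑ k ∈ Finset.Icc 1 K, ((g k - f k) - (g (k - 1) - f (k - 1)))) = 0 := by
    have h := sum_Icc_telescope (fun k => g k - f k) K
    rw [h, h0, hK]
    abel
  have hcross : ∑ k ∈ Finset.Icc 1 K,
      (2 * c) * (inner ℝ v ((g k - f k) - (g (k - 1) - f (k - 1))) : ℝ) = 0 := by
    rw [← Finset.mul_sum, ← inner_sum, hsum0, inner_zero_right, mul_zero]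
  rw [hcross, add_zero]

/-- For measurable weights `ε ≤ w_k ≤ M` and `A, B ∈ L²(Ω, E)`, the
pointwise linear interpolations `F̂_k(x) = A(x) + t_k(x)(B(x) − A(x))` belong to
`L²(Ω, E)` and uniquely (up to null sets) minimize the weighted discrete path energy
among all `L²` tuples joining `A` to `B`. -/
theorem weighted_energy_unique_minimizer_L2
    {n : ℕ} (hn : 1 ≤ n)
    (Ω : Set (EuclideanSpace ℝ (Fin n))) (hΩo : IsOpen Ω) (hΩb : Bornology.IsBounded Ω)
    {E : Type*} [NormedAddCommGroup E] [InnerProductSpace ℝ E] [CompleteSpace E]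
    (K : ℕ) (hK : 1 ≤ K) (ε M : ℝ) (hε : 0 < ε) (hεM : ε ≤ M)
    (w : ℕ → EuclideanSpace ℝ (Fin n) → ℝ)
    (hwmeas : ∀ k, Measurable (w k))
    (hw : ∀ k ∈ Finset.Icc 1 K, ∀ x ∈ Ω, ε ≤ w k x ∧ w k x ≤ M)
    (A B : EuclideanSpace ℝ (Fin n) → E)
    (hA : MemLp A 2 (volume.restrict Ω)) (hB : MemLp B 2 (volume.restrict Ω))
    (t : ℕ → EuclideanSpace ℝ (Fin n) → ℝ)
    (ht : ∀ k x, t k x = (∑ i ∈ Finset.Icc 1 k, (w i x)⁻¹)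
      / (∑ i ∈ Finset.Icc 1 K, (w i x)⁻¹))
    (F : ℕ → EuclideanSpace ℝ (Fin n) → E)
    (hF0 : F 0 = A) (hFK : F K = B)
    (hF : ∀ k, 1 ≤ k → k ≤ K - 1 → ∀ x, F k x = A x + t k x • (B x - A x)) :
    (∀ k ≤ K, MemLp (F k) 2 (volume.restrict Ω)) ∧
    ∀ G : ℕ → EuclideanSpace ℝ (Fin n) → E,
      (∀ k ≤ K, MemLp (G k) 2 (volume.restrict Ω)) → G 0 = A → G K = B →
      (∑ k ∈ Finset.Icc 1 K,
          ∫⁻ x in Ω, ENNReal.ofReal (w k x * ‖F k x - F (k - 1) x‖ ^ 2)) ≤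
        (∑ k ∈ Finset.Icc 1 K,
          ∫⁻ x in Ω, ENNReal.ofReal (w k x * ‖G k x - G (k - 1) x‖ ^ 2)) ∧
      ((∑ k ∈ Finset.Icc 1 K,
          ∫⁻ x in Ω, ENNReal.ofReal (w k x * ‖G k x - G (k - 1) x‖ ^ 2))
          = (∑ k ∈ Finset.Icc 1 K,
          ∫⁻ x in Ω, ENNReal.ofReal (w k x * ‖F k x - F (k - 1) x‖ ^ 2)) ↔
        ∀ k, 1 ≤ k → k ≤ K - 1 → G k =ᵐ[volume.restrict Ω] F k) := by
  have hΩm : MeasurableSet Ω := hΩo.measurableSet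
  set μ := volume.restrict Ω with hμ
  have hwpos : ∀ k ∈ Finset.Icc 1 K, ∀ x ∈ Ω, 0 < w k x :=
    fun k hk x hx => lt_of_lt_of_le hε (hw k hk x hx).1
  have hSpos : ∀ x ∈ Ω, 0 < ∑ i ∈ Finset.Icc 1 K, (w i x)⁻¹ := by
    intro x hx
    apply Finset.sum_pos (fun i hi => inv_pos.mpr (hwpos i hi x hx))
    exact Finset.nonempty_Icc.mpr hK
  have htmeas : ∀ k, Measurable (t k) := by
    intro k
    have htk : t k = fun x => (∑ i ∈ Finset.Icc 1 k, (w i x)⁻¹)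
        / (∑ i ∈ Finset.Icc 1 K, (w i x)⁻¹) := funext (ht k)
    rw [htk]
    exact (Finset.measurable_sum _ fun i _ => (hwmeas i).inv).div
      (Finset.measurable_sum _ fun i _ => (hwmeas i).inv)
  have htbd : ∀ k, k ≤ K → ∀ x ∈ Ω, 0 ≤ t k x ∧ t k x ≤ 1 := by
    intro k hkK x hx
    rw [ht]
    have hnum : 0 ≤ ∑ i ∈ Finset.Icc 1 k, (w i x)⁻¹ :=
      Finset.sum_nonneg fun i hi =>
        (inv_pos.mpr (hwpos i (Finset.Icc_subset_Icc_right hkK hi) x hx)).le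
    constructor
    · exact div_nonneg hnum (hSpos x hx).le
    · rw [div_le_one (hSpos x hx)]
      exact Finset.sum_le_sum_of_subset_of_nonneg (Finset.Icc_subset_Icc_right hkK)
        (fun i hi _ => (inv_pos.mpr (hwpos i hi x hx)).le)
  have hFmem : ∀ k ≤ K, MemLp (F k) 2 μ := by
    intro k hkK
    rcases eq_or_ne k 0 with rfl | h0
    · rw [hF0]; exact hA
    rcases eq_or_ne k K with rfl | hke
    · rw [hFK]; exact hB
    have hFk : F k = fun x => A x + t k x • (B x - A x) :=
      funext (hF k (by omega) (by omega))
    rw [hFk]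
    have htop : MemLp (t k) ∞ μ := by
      refine memLp_top_of_bound (htmeas k).aestronglyMeasurable 1 ?_
      filter_upwards [ae_restrict_mem hΩm] with x hx
      have h := htbd k hkK x hx
      rw [Real.norm_eq_abs, abs_le]
      exact ⟨by linarith [h.1], h.2⟩
    exact hA.add ((hB.sub hA).smul htop (r := 2))
  refine ⟨hFmem, ?_⟩
  intro G hGmem hG0 hGK
  -- pointwise formula for F on Ω
  have hFP : ∀ x ∈ Ω, ∀ k ≤ K, F k x = A x + ((∑ i ∈ Finset.Icc 1 k, (w i x)⁻¹)
      / (∑ i ∈ Finset.Icc 1 K, (w i x)⁻¹)) • (B x - A x) := by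
    intro x hx k hkK
    rcases eq_or_ne k 0 with rfl | h0
    · have he : Finset.Icc 1 0 = (∅ : Finset ℕ) := by simp
      simp [hF0, he]
    rcases eq_or_ne k K with rfl | hke
    · rw [hFK, div_self (hSpos x hx).ne', one_smul]; abel
    · rw [hF k (by omega) (by omega) x, ht]
  have hFdiff : ∀ x ∈ Ω, ∀ k ∈ Finset.Icc 1 K,
      F k x - F (k - 1) x
        = ((w k x)⁻¹ * (∑ i ∈ Finset.Icc 1 K, (w i x)⁻¹)⁻¹) • (B x - A x) := by
    intro x hx k hk
    obtain ⟨hk1, hkK⟩ := Finset.mem_Icc.mp hk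
    obtain ⟨m, rfl⟩ : ∃ m, k = m + 1 := ⟨k - 1, by omega⟩
    rw [hFP x hx (m + 1) hkK]
    simp only [Nat.add_sub_cancel]
    rw [hFP x hx m (by omega)]
    set S := ∑ i ∈ Finset.Icc 1 K, (w i x)⁻¹ with hS
    have hSne : S ≠ 0 := (hSpos x hx).ne'
    have hstep : ∀ a b : ℝ, A x + a • (B x - A x) - (A x + b • (B x - A x))
        = (a - b) • (B x - A x) := by intro a b; rw [sub_smul]; abel
    rw [hstep]
    congr 1
    have hsucc : (∑ i ∈ Finset.Icc 1 (m + 1), (w i x)⁻¹)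
        = (∑ i ∈ Finset.Icc 1 m, (w i x)⁻¹) + (w (m + 1) x)⁻¹ :=
      Finset.sum_Icc_succ_top (Nat.le_add_left 1 m) _
    rw [div_sub_div_same, hsucc, add_sub_cancel_left, div_eq_mul_inv]
  -- pointwise energy decomposition on Ω
  have hpt : ∀ x ∈ Ω,
      ∑ k ∈ Finset.Icc 1 K, w k x * ‖G k x - G (k - 1) x‖ ^ 2
        = ∑ k ∈ Finset.Icc 1 K, w k x * ‖F k x - F (k - 1) x‖ ^ 2
          + ∑ k ∈ Finset.Icc 1 K,
              w k x * ‖(G k x - F k x) - (G (k - 1) x - F (k - 1) x)‖ ^ 2 := by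
    intro x hx
    exact energy_decomp K (∑ i ∈ Finset.Icc 1 K, (w i x)⁻¹)⁻¹ (B x - A x)
      (fun k => w k x) (fun k => F k x) (fun k => G k x)
      (by simp [hG0, hF0]) (by simp [hGK, hFK])
      (fun k hk => (hwpos k hk x hx).ne')
      (fun k hk => hFdiff x hx k hk)
  -- measurability of the integrands
  have hmeasq : ∀ (H : ℕ → EuclideanSpace ℝ (Fin n) → E),
      (∀ k ≤ K, AEStronglyMeasurable (H k) μ) → ∀ k ∈ Finset.Icc 1 K,
      AEMeasurable (fun x => ENNReal.ofReal (w k x * ‖H k x - H (k - 1) x‖ ^ 2)) μ := by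
    intro H hH k hk
    obtain ⟨hk1, hkK⟩ := Finset.mem_Icc.mp hk
    exact ((hwmeas k).aemeasurable.mul
      ((((hH k hkK).sub (hH (k - 1) (by omega))).norm.aemeasurable).pow_const 2)).ennreal_ofReal
  have hFsm : ∀ k ≤ K, AEStronglyMeasurable (F k) μ := fun k hk => (hFmem k hk).aestronglyMeasurable
  have hGsm : ∀ k ≤ K, AEStronglyMeasurable (G k) μ := fun k hk => (hGmem k hk).aestronglyMeasurable
  have hDsm : ∀ k ≤ K, AEStronglyMeasurable (fun x => G k x - F k x) μ :=
    fun k hk => (hGsm k hk).sub (hFsm k hk)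
  have hqm := hmeasq G hGsm
  have hpm := hmeasq F hFsm
  have hrm := hmeasq (fun k x => G k x - F k x) hDsm
  -- the key integral identity
  have hQPR : (∑ k ∈ Finset.Icc 1 K,
        ∫⁻ x in Ω, ENNReal.ofReal (w k x * ‖G k x - G (k - 1) x‖ ^ 2))
      = (∑ k ∈ Finset.Icc 1 K,
          ∫⁻ x in Ω, ENNReal.ofReal (w k x * ‖F k x - F (k - 1) x‖ ^ 2))
        + (∑ k ∈ Finset.Icc 1 K,
          ∫⁻ x in Ω, ENNReal.ofReal
            (w k x * ‖(G k x - F k x) - (G (k - 1) x - F (k - 1) x)‖ ^ 2)) := by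
    rw [← lintegral_finset_sum' _ hqm, ← lintegral_finset_sum' _ hpm,
      ← lintegral_finset_sum' _ hrm,
      ← lintegral_add_left' (Finset.aemeasurable_fun_sum _ hpm)]
    apply lintegral_congr_ae
    filter_upwards [ae_restrict_mem hΩm] with x hx
    have hnn : ∀ (H : ℕ → EuclideanSpace ℝ (Fin n) → E), ∀ i ∈ Finset.Icc 1 K,
        0 ≤ w i x * ‖H i x - H (i - 1) x‖ ^ 2 :=
      fun H i hi => mul_nonneg (hwpos i hi x hx).le (sq_nonneg _)
    rw [← ENNReal.ofReal_sum_of_nonneg (hnn G), ← ENNReal.ofReal_sum_of_nonneg (hnn F),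
      ← ENNReal.ofReal_sum_of_nonneg (hnn (fun k x => G k x - F k x)),
      ← ENNReal.ofReal_add (Finset.sum_nonneg (hnn F))
        (Finset.sum_nonneg (hnn (fun k x => G k x - F k x))), hpt x hx]
  -- finiteness of the F-energy
  have hPfin : (∑ k ∈ Finset.Icc 1 K,
      ∫⁻ x in Ω, ENNReal.ofReal (w k x * ‖F k x - F (k - 1) x‖ ^ 2)) ≠ ∞ := by
    rw [← lt_top_iff_ne_top, ENNReal.sum_lt_top]
    intro k hk
    obtain ⟨hk1, hkK⟩ := Finset.mem_Icc.mp hk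
    have hmem2 : MemLp (fun x => F k x - F (k - 1) x) 2 μ :=
      (hFmem k hkK).sub (hFmem (k - 1) (by omega))
    have hfin2 : ∫⁻ x in Ω, (‖F k x - F (k - 1) x‖₊ : ℝ≥0∞) ^ (2 : ℕ) < ∞ := by
      have h := lintegral_rpow_enorm_lt_top_of_eLpNorm_lt_top (p := 2)
        two_ne_zero ENNReal.ofNat_ne_top hmem2.2
      have heq : ∀ y : ℝ≥0∞, y ^ ((2 : ℝ≥0∞).toReal) = y ^ (2 : ℕ) := by
        intro y
        rw [ENNReal.toReal_ofNat]
        rw [show ((2 : ℝ)) = ((2 : ℕ) : ℝ) by norm_num, ENNReal.rpow_natCast]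
      simpa only [heq, enorm_eq_nnnorm] using h
    calc ∫⁻ x in Ω, ENNReal.ofReal (w k x * ‖F k x - F (k - 1) x‖ ^ 2)
        ≤ ∫⁻ x in Ω, ENNReal.ofReal M * (‖F k x - F (k - 1) x‖₊ : ℝ≥0∞) ^ (2 : ℕ) := by
          apply lintegral_mono_ae
          filter_upwards [ae_restrict_mem hΩm] with x hx
          calc ENNReal.ofReal (w k x * ‖F k x - F (k - 1) x‖ ^ 2)
              ≤ ENNReal.ofReal (M * ‖F k x - F (k - 1) x‖ ^ 2) :=
                ENNReal.ofReal_le_ofReal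
                  (mul_le_mul_of_nonneg_right (hw k hk x hx).2 (sq_nonneg _))
            _ = ENNReal.ofReal M * (‖F k x - F (k - 1) x‖₊ : ℝ≥0∞) ^ (2 : ℕ) := by
                rw [ENNReal.ofReal_mul (le_trans hε.le hεM),
                  ENNReal.ofReal_pow (norm_nonneg _), ofReal_norm, enorm_eq_nnnorm]
      _ = ENNReal.ofReal M * ∫⁻ x in Ω, (‖F k x - F (k - 1) x‖₊ : ℝ≥0∞) ^ (2 : ℕ) :=
          lintegral_const_mul' _ _ ENNReal.ofReal_ne_top
      _ < ∞ := ENNReal.mul_lt_top ENNReal.ofReal_lt_top hfin2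
  constructor
  · rw [hQPR]; exact le_self_add
  constructor
  · -- equality implies a.e. equality
    intro heq
    have hR0 : (∑ k ∈ Finset.Icc 1 K,
        ∫⁻ x in Ω, ENNReal.ofReal
          (w k x * ‖(G k x - F k x) - (G (k - 1) x - F (k - 1) x)‖ ^ 2)) = 0 := by
      have h := hQPR.symm.trans heq
      exact (ENNReal.add_right_inj hPfin).mp (h.trans (add_zero _).symm)
    have hterm : ∀ k ∈ Finset.Icc 1 K,
        (∫⁻ x in Ω, ENNReal.ofReal
          (w k x * ‖(G k x - F k x) - (G (k - 1) x - F (k - 1) x)‖ ^ 2)) = 0 :=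
      Finset.sum_eq_zero_iff.mp hR0
    have hstep : ∀ k ∈ Finset.Icc 1 K,
        (fun x => G k x - F k x) =ᵐ[μ] fun x => G (k - 1) x - F (k - 1) x := by
      intro k hk
      have h0 := (lintegral_eq_zero_iff' (hrm k hk)).mp (hterm k hk)
      filter_upwards [h0, ae_restrict_mem hΩm] with x hx1 hx2
      simp only [Pi.zero_apply, ENNReal.ofReal_eq_zero] at hx1
      have hwx := hwpos k hk x hx2
      have hsq : ‖(G k x - F k x) - (G (k - 1) x - F (k - 1) x)‖ ^ 2 = 0 := by
        nlinarith [sq_nonneg ‖(G k x - F k x) - (G (k - 1) x - F (k - 1) x)‖]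
      have hvec : (G k x - F k x) - (G (k - 1) x - F (k - 1) x) = 0 :=
        norm_eq_zero.mp (pow_eq_zero_iff two_ne_zero |>.mp hsq)
      exact sub_eq_zero.mp hvec
    have hzero : ∀ k ≤ K, (fun x => G k x - F k x) =ᵐ[μ] fun _ => (0 : E) := by
      intro k
      induction k with
      | zero =>
          intro _
          apply Filter.EventuallyEq.of_eq
          funext x
          simp [hG0, hF0]
      | succ m ih =>
          intro hm
          have h1 := hstep (m + 1) (Finset.mem_Icc.mpr ⟨by omega, hm⟩)
          simp only [Nat.add_sub_cancel] at h1
          exact h1.trans (ih (by omega))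
    intro k hk1 hk2
    filter_upwards [hzero k (by omega)] with x hx
    exact sub_eq_zero.mp hx
  · -- a.e. equality implies equality of energies
    intro h
    have haeeq : ∀ k ≤ K, G k =ᵐ[μ] F k := by
      intro k hkK
      rcases eq_or_ne k 0 with rfl | h0
      · exact Filter.EventuallyEq.of_eq (hG0.trans hF0.symm)
      rcases eq_or_ne k K with rfl | hke
      · exact Filter.EventuallyEq.of_eq (hGK.trans hFK.symm)
      · exact h k (by omega) (by omega)
    apply Finset.sum_congr rfl
    intro k hk
    obtain ⟨hk1, hkK⟩ := Finset.mem_Icc.mp hk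
    apply lintegral_congr_ae
    filter_upwards [haeeq k hkK, haeeq (k - 1) (by omega)] with x h1 h2
    rw [h1, h2]
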